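/- Let u_1 ≤ u_2 ≤ ... ≤ u_N and ũ_1, ..., ũ_N be nonnegative reals such that for every i, ∑_{j=1}^i ũ_j ≤ ∑_{j=1}^N min{u_i, u_j}. Then ∑_{i=1}^N log u_i ≥ ∑_{i=1}^N log( ∑_{j=1}^i ũ_j/(N+1−j) ), assuming all quantities inside logarithms are positive. -/

import Mathlib

open Finset

lemma key_lemma (N : ℕ) (hN : 0 < N) (a x : ℕ → ℝ)
    (ha : ∀ k, k < N → 0 < a k)
    (hmono : ∀ j k, j ≤ k → k < N → a j ≤ a k)
    (hcon : ∀ i, i < N →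
      ∑ k ∈ range (i+1), x k ≤ ∑ k ∈ range (i+1), a k + ((N:ℝ) - (i+1)) * a i)
    (hv : ∀ i, i < N → 0 < ∑ k ∈ range (i+1), x k / ((N:ℝ) - k)) :
    ∑ i ∈ range N, Real.log (∑ k ∈ range (i+1), x k / ((N:ℝ) - k)) ≤
      ∑ i ∈ range N, Real.log (a i) := by
  have hNk : ∀ k : ℕ, k < N → (0:ℝ) < (N:ℝ) - k := by
    intro k hk
    have : (k:ℝ) < N := by exact_mod_cast hk
    linarith
  set b : ℕ → ℝ := fun k => if k = 0 then a 0 else a k - a (k-1) with hb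
  set t : ℕ → ℝ := fun k => ((N:ℝ) - k) * b k with ht
  set v : ℕ → ℝ := fun i => ∑ k ∈ range (i+1), x k / ((N:ℝ) - k) with hvdef
  -- Identity 1
  have id1 : ∀ i, i < N → ∑ k ∈ range (i+1), t k / ((N:ℝ) - k) = a i := by
    intro i hi
    have : ∀ k ∈ range (i+1), t k / ((N:ℝ) - k) = b k := by
      intro k hk
      have hkN : k < N := lt_of_lt_of_le (mem_range.mp hk) hi
      field_simp [ht, ne_of_gt (hNk k hkN)]
      simp only [ht]
    rw [Finset.sum_congr rfl this]
    clear this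
    induction i with
    | zero => simp [hb]
    | succ n ih =>
      rw [Finset.sum_range_succ, ih (Nat.lt_of_succ_lt hi)]
      simp [hb]
  -- Identity 2
  have id2 : ∀ i, i < N →
      ∑ k ∈ range (i+1), t k = ∑ k ∈ range (i+1), a k + ((N:ℝ) - (i+1)) * a i := by
    intro i hi
    induction i with
    | zero => simp [ht, hb]; ring
    | succ n ih =>
      have h1 : ∑ k ∈ range (n+2), t k = (∑ k ∈ range (n+1), t k) + t (n+1) :=
        Finset.sum_range_succ _ _
      have h2 : ∑ k ∈ range (n+2), a k = (∑ k ∈ range (n+1), a k) + a (n+1) :=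
        Finset.sum_range_succ _ _
      have ht1 : t (n+1) = ((N:ℝ) - ((n:ℝ)+1)) * (a (n+1) - a n) := by
        simp [ht, hb]
      rw [h1, ih (Nat.lt_of_succ_lt hi), h2, ht1]
      push_cast
      ring
  -- prefix sums nonpositive
  have hP : ∀ i, i < N → ∑ k ∈ range (i+1), (x k - t k) ≤ 0 := by
    intro i hi
    rw [Finset.sum_sub_distrib, id2 i hi]
    have := hcon i hi
    linarith
  -- the coefficients
  set c : ℕ → ℝ := fun k => (∑ i ∈ Ico k N, (a i)⁻¹) / ((N:ℝ) - k) with hc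
  have hcnonneg : ∀ k, k < N → 0 ≤ c k := by
    intro k hk
    apply div_nonneg _ (le_of_lt (hNk k hk))
    apply Finset.sum_nonneg
    intro i hi
    exact inv_nonneg.mpr (le_of_lt (ha i (mem_Ico.mp hi).2))
  have hcmono : ∀ k, k + 1 < N → c (k+1) ≤ c k := by
    intro k hk1
    have hkN : k < N := Nat.lt_of_succ_lt hk1
    have hS : ∑ i ∈ Ico (k+1) N, (a i)⁻¹ ≤ ((N:ℝ) - (k+1)) * (a k)⁻¹ := by
      have hcard : ((N - (k+1) : ℕ) : ℝ) = (N:ℝ) - (k+1) := by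
        have : k + 1 ≤ N := le_of_lt hk1
        push_cast [Nat.cast_sub this]
        ring
      calc ∑ i ∈ Ico (k+1) N, (a i)⁻¹
          ≤ (Ico (k+1) N).card • (a k)⁻¹ := by
            apply Finset.sum_le_card_nsmul
            intro i hi
            have hi2 := mem_Ico.mp hi
            exact inv_anti₀ (ha k hkN) (hmono k i (le_of_lt hi2.1) hi2.2)
        _ = ((N:ℝ) - (k+1)) * (a k)⁻¹ := by
            rw [Nat.card_Ico, nsmul_eq_mul, hcard]
    have hsplit : ∑ i ∈ Ico k N, (a i)⁻¹ = (a k)⁻¹ + ∑ i ∈ Ico (k+1) N, (a i)⁻¹ :=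
      Finset.sum_eq_sum_Ico_succ_bot hkN _
    have hpos1 : (0:ℝ) < (N:ℝ) - ((k:ℝ)+1) := by
      have : ((k:ℝ)+1) < N := by exact_mod_cast hk1
      linarith
    simp only [hc]
    push_cast
    rw [hsplit, div_le_div_iff₀ hpos1 (hNk k hkN)]
    have hak : 0 < (a k)⁻¹ := inv_pos.mpr (ha k hkN)
    nlinarith [hS]
  -- step 1 : convexity of log
  have step1 : ∑ i ∈ range N, (Real.log (v i) - Real.log (a i)) ≤
      ∑ i ∈ range N, (v i - a i) / a i := by
    apply Finset.sum_le_sum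
    intro i hi
    have hiN := mem_range.mp hi
    have hvi := hv i hiN
    have hai := ha i hiN
    have h1 : Real.log (v i) - Real.log (a i) = Real.log (v i / a i) := by
      rw [Real.log_div (ne_of_gt hvi) (ne_of_gt hai)]
    rw [h1]
    have h2 := Real.log_le_sub_one_of_pos (div_pos hvi hai)
    have h3 : v i / a i - 1 = (v i - a i) / a i := by field_simp
    linarith [h2, h3.le]
  -- step 2 : swap sums
  have step2 : ∑ i ∈ range N, (v i - a i) / a i = ∑ k ∈ range N, (x k - t k) * c k := by
    have e1 : ∀ i ∈ range N, (v i - a i) / a i =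
        ∑ k ∈ range (i+1), ((x k - t k) / ((N:ℝ) - k)) * (a i)⁻¹ := by
      intro i hi
      have hiN := mem_range.mp hi
      rw [← Finset.sum_mul]
      have : v i - a i = ∑ k ∈ range (i+1), (x k - t k) / ((N:ℝ) - k) := by
        rw [hvdef]
        simp only
        rw [← id1 i hiN, ← Finset.sum_sub_distrib]
        congr 1; ext k; ring
      rw [this, div_eq_mul_inv]
    rw [Finset.sum_congr rfl e1]
    have e2 : ∀ i ∈ range N, ∑ k ∈ range (i+1), ((x k - t k) / ((N:ℝ) - k)) * (a i)⁻¹ =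
        ∑ k ∈ range N, if k ≤ i then ((x k - t k) / ((N:ℝ) - k)) * (a i)⁻¹ else 0 := by
      intro i hi
      have hiN := mem_range.mp hi
      rw [Finset.sum_ite, Finset.sum_const_zero, add_zero]
      apply Finset.sum_congr _ (fun _ _ => rfl)
      ext k
      simp only [mem_filter, mem_range]
      omega
    rw [Finset.sum_congr rfl e2, Finset.sum_comm]
    apply Finset.sum_congr rfl
    intro k hk
    have hkN := mem_range.mp hk
    have e3 : (filter (fun i => k ≤ i) (range N)) = Ico k N := by
      ext i; simp only [mem_filter, mem_range, mem_Ico]; omega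
    rw [← Finset.sum_filter, e3, ← Finset.mul_sum]
    simp only [hc]
    ring
  -- step 3 : Abel summation
  set z : ℕ → ℝ := fun k => x k - t k with hz
  have habel := Finset.sum_range_by_parts c z N
  have step3 : ∑ k ∈ range N, (x k - t k) * c k ≤ 0 := by
    have comm : ∑ k ∈ range N, (x k - t k) * c k = ∑ k ∈ range N, c k • z k := by
      apply Finset.sum_congr rfl
      intro k _
      simp only [hz, smul_eq_mul]
      ring
    rw [comm, habel]
    have hPN : ∑ k ∈ range N, z k ≤ 0 := by
      have h := hP (N-1) (by omega)
      have he : N - 1 + 1 = N := by omega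
      rw [he] at h
      exact h
    have h1 : c (N-1) • ∑ k ∈ range N, z k ≤ 0 := by
      have hcn := hcnonneg (N-1) (by omega)
      simp only [smul_eq_mul]
      exact mul_nonpos_iff.mpr (Or.inl ⟨hcn, hPN⟩)
    have h2 : 0 ≤ ∑ k ∈ range (N-1), (c (k+1) - c k) • ∑ j ∈ range (k+1), z j := by
      apply Finset.sum_nonneg
      intro k hk
      have hkN : k + 1 < N := by have := mem_range.mp hk; omega
      have hm := hcmono k hkN
      have hp := hP k (by omega)
      simp only [smul_eq_mul, hz]
      nlinarith [hm, hp]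
    linarith
  -- conclude
  have final : ∑ i ∈ range N, Real.log (v i) - ∑ i ∈ range N, Real.log (a i) ≤ 0 := by
    rw [← Finset.sum_sub_distrib]
    calc ∑ i ∈ range N, (Real.log (v i) - Real.log (a i))
        ≤ ∑ i ∈ range N, (v i - a i) / a i := step1
      _ = ∑ k ∈ range N, (x k - t k) * c k := step2
      _ ≤ 0 := step3
  linarith

lemma filter_sum_eq (N : ℕ) (i : Fin N) (F : Fin N → ℝ) :
    ∑ j ∈ Finset.univ.filter (fun j => j ≤ i), F j
      = ∑ k ∈ range (i.1 + 1), (if h : k < N then F ⟨k, h⟩ else 0) := by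
  rw [Finset.sum_filter]
  have h1 : ∑ j : Fin N, (if j ≤ i then F j else 0)
      = ∑ k ∈ range N, (fun k : ℕ =>
          if h : k < N then (if k ≤ i.1 then F ⟨k, h⟩ else 0) else 0) k := by
    rw [← Fin.sum_univ_eq_sum_range]
    apply Finset.sum_congr rfl
    intro j _
    simp only [j.2, dif_pos, Fin.le_def, Fin.eta]
  rw [h1]
  have h2 : ∀ k ∈ range N, (fun k : ℕ =>
      if h : k < N then (if k ≤ i.1 then F ⟨k, h⟩ else 0) else 0) k
      = if k ≤ i.1 then (if h : k < N then F ⟨k, h⟩ else 0) else 0 := by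
    intro k hk
    simp [mem_range.mp hk]
  rw [Finset.sum_congr rfl h2, Finset.sum_ite, Finset.sum_const_zero, add_zero]
  apply Finset.sum_congr _ (fun _ _ => rfl)
  ext k
  simp only [mem_filter, mem_range]
  have := i.2
  omega

/-- Subject to the prefix constraints, the sum of logs of the algorithm's
utilities is minimized when all constraints are tight. -/
theorem binary_utility_lower_bound
    (N : ℕ) (hN : 0 < N)
    (u util : Fin N → ℝ)
    (hmono : ∀ i j : Fin N, i ≤ j → u i ≤ u j)
    (hu_pos : ∀ i, 0 < u i)
    (hutil_nonneg : ∀ i, 0 ≤ util i)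
    (hconstraint : ∀ i : Fin N,
      (∑ j ∈ Finset.univ.filter (fun j => j ≤ i), util j) ≤ ∑ j, min (u i) (u j))
    (hpos : ∀ i : Fin N,
      0 < ∑ j ∈ Finset.univ.filter (fun j => j ≤ i), util j / ((N : ℝ) - (j : ℕ))) :
    (∑ i, Real.log (u i)) ≥
      ∑ i : Fin N, Real.log
        (∑ j ∈ Finset.univ.filter (fun j => j ≤ i), util j / ((N : ℝ) - (j : ℕ))) := by
  set a : ℕ → ℝ := fun k => if h : k < N then u ⟨k, h⟩ else 1 with hadef
  set xx : ℕ → ℝ := fun k => if h : k < N then util ⟨k, h⟩ else 0 with hxdef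
  -- the inner sums coincide
  have hinner : ∀ i : Fin N,
      ∑ j ∈ Finset.univ.filter (fun j => j ≤ i), util j / ((N : ℝ) - (j : ℕ))
        = ∑ k ∈ range (i.1 + 1), xx k / ((N : ℝ) - k) := by
    intro i
    rw [filter_sum_eq N i (fun j => util j / ((N : ℝ) - (j : ℕ)))]
    apply Finset.sum_congr rfl
    intro k hk
    have hkN : k < N := by have := mem_range.mp hk; have := i.2; omega
    simp [hkN, hxdef]
  have hutil : ∀ i : Fin N,
      ∑ j ∈ Finset.univ.filter (fun j => j ≤ i), util j
        = ∑ k ∈ range (i.1 + 1), xx k := by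
    intro i
    rw [filter_sum_eq N i util]
  have hufil : ∀ i : Fin N,
      ∑ j ∈ Finset.univ.filter (fun j => j ≤ i), u j
        = ∑ k ∈ range (i.1 + 1), a k := by
    intro i
    rw [filter_sum_eq N i u]
    apply Finset.sum_congr rfl
    intro k hk
    have hkN : k < N := by have := mem_range.mp hk; have := i.2; omega
    simp [hkN, hadef]
  -- the min-sum identity
  have hminsum : ∀ i : Fin N,
      ∑ j, min (u i) (u j)
        = ∑ k ∈ range (i.1 + 1), a k + ((N:ℝ) - (i.1 + 1)) * a i.1 := by
    intro i
    rw [← Finset.sum_filter_add_sum_filter_not univ (fun j => j ≤ i) (fun j => min (u i) (u j))]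
    have e1 : ∑ j ∈ Finset.univ.filter (fun j => j ≤ i), min (u i) (u j)
        = ∑ j ∈ Finset.univ.filter (fun j => j ≤ i), u j := by
      apply Finset.sum_congr rfl
      intro j hj
      exact min_eq_right (hmono j i (mem_filter.mp hj).2)
    have e2 : ∑ j ∈ Finset.univ.filter (fun j => ¬ j ≤ i), min (u i) (u j)
        = ((N:ℝ) - (i.1 + 1)) * u i := by
      have e3 : ∀ j ∈ Finset.univ.filter (fun j => ¬ j ≤ i), min (u i) (u j) = u i := by
        intro j hj
        have := (mem_filter.mp hj).2
        exact min_eq_left (hmono i j (le_of_lt (lt_of_not_ge this)))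
      rw [Finset.sum_congr rfl e3, Finset.sum_const, nsmul_eq_mul]
      congr 1
      have hcard1 : (Finset.univ.filter (fun j => j ≤ i)).card = i.1 + 1 := by
        have : Finset.univ.filter (fun j => j ≤ i) = Finset.Iic i := by
          ext j; simp
        rw [this, Fin.card_Iic]
      have hcard2 : (Finset.univ.filter (fun j => j ≤ i)).card
          + (Finset.univ.filter (fun j => ¬ j ≤ i)).card = N := by
        rw [Finset.card_filter_add_card_filter_not]
        simp
      have : (Finset.univ.filter (fun j => ¬ j ≤ i)).card = N - (i.1 + 1) := by omega
      rw [this]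
      have hi2 := i.2
      push_cast [Nat.cast_sub (by omega : i.1 + 1 ≤ N)]
      ring
    rw [e1, e2, hufil i]
    have : u i = a i.1 := by simp [hadef, i.2]
    rw [this]
  -- apply the key lemma
  have happ := key_lemma N hN a xx
    (by intro k hk; simp only [hadef, hk, dif_pos]; exact hu_pos _)
    (by
      intro j k hjk hkN
      simp only [hadef, hkN, dif_pos, lt_of_le_of_lt hjk hkN]
      exact hmono ⟨j, lt_of_le_of_lt hjk hkN⟩ ⟨k, hkN⟩ hjk)
    (by
      intro i hiN
      have := hconstraint ⟨i, hiN⟩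
      rw [hutil ⟨i, hiN⟩, hminsum ⟨i, hiN⟩] at this
      exact this)
    (by
      intro i hiN
      have := hpos ⟨i, hiN⟩
      rw [hinner ⟨i, hiN⟩] at this
      exact this)
  -- transfer back
  have lhs : ∑ i : Fin N, Real.log (u i) = ∑ i ∈ range N, Real.log (a i) := by
    rw [← Fin.sum_univ_eq_sum_range (fun k => Real.log (a k))]
    apply Finset.sum_congr rfl
    intro j _
    simp [hadef, j.2]
  have rhs : ∑ i : Fin N, Real.log
        (∑ j ∈ Finset.univ.filter (fun j => j ≤ i), util j / ((N : ℝ) - (j : ℕ)))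
      = ∑ i ∈ range N, Real.log (∑ k ∈ range (i + 1), xx k / ((N:ℝ) - k)) := by
    rw [← Fin.sum_univ_eq_sum_range
      (fun i => Real.log (∑ k ∈ range (i + 1), xx k / ((N:ℝ) - k)))]
    apply Finset.sum_congr rfl
    intro j _
    rw [hinner j]
  rw [ge_iff_le, rhs, lhs]
  exact happ
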